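/- Let d ≥ 2 and let 𝒫 ⊂ ℝ^d be the polytope defined by 0 ≤ x_i ≤ 2 for 1 ≤ i ≤ d−1, 0 ≤ x_d ≤ d, and x_1 + ··· + x_d ≤ d+1. For 1 ≤ i ≤ d−1, let y_i = (1, ..., 1, (i−1)d + i, i) ∈ ℤ^{d+1} (first d−1 coordinates equal to 1). Then y_i ∈ M*(𝒫) and y_i is M(𝒫)-irreducible, i.e., rdeg y_i = i. -/

import Mathlib

open Set

noncomputable section

/-- Lift a point of `ℝ^m` to height 1 in `ℝ^(m+1)`. -/
def lift {m : ℕ} (x : Fin m → ℝ) : Fin (m + 1) → ℝ := Fin.snoc x 1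

/-- A point with integer coordinates (a lattice point). -/
def isLat {n : ℕ} (x : Fin n → ℝ) : Prop := ∀ i, ∃ z : ℤ, x i = (z : ℝ)

/-- The cone `C(P)` generated by `P × {1}` (for convex `P`). -/
def coneOf {m : ℕ} (P : Set (Fin m → ℝ)) : Set (Fin (m + 1) → ℝ) :=
  {y | ∃ (c : ℝ) (p : Fin m → ℝ), 0 ≤ c ∧ p ∈ P ∧ y = c • lift p}

/-- The semigroup `M(P)` generated by the lattice points of `P × {1}`. -/
def Msemi {m : ℕ} (P : Set (Fin m → ℝ)) : AddSubmonoid (Fin (m + 1) → ℝ) :=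
  AddSubmonoid.closure {y | ∃ p ∈ P, isLat p ∧ y = lift p}

/-- `M*(P)`: the lattice points in the relative interior of `C(P)`. -/
def Mstar {m : ℕ} (P : Set (Fin m → ℝ)) : Set (Fin (m + 1) → ℝ) :=
  {y | y ∈ intrinsicInterior ℝ (coneOf P) ∧ isLat y}

/-- The degree: the last coordinate. -/
def deg {m : ℕ} (y : Fin (m + 1) → ℝ) : ℝ := y (Fin.last m)

/-- The reduced `P`-degree of `y`. -/
def rdeg {m : ℕ} (P : Set (Fin m → ℝ)) (y : Fin (m + 1) → ℝ) : ℝ :=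
  sInf {r | ∃ z w, z ∈ Mstar P ∧ w ∈ Msemi P ∧ y = z + w ∧ r = deg z}

/-- An empty lattice simplex: its only lattice points are its vertices. -/
def IsEmptyLatticeSimplex {m : ℕ} (s : Set (Fin m → ℝ)) : Prop :=
  ∃ (k : ℕ) (x : Fin (k + 1) → (Fin m → ℝ)), AffineIndependent ℝ x ∧
    (∀ i, isLat (x i)) ∧ s = convexHull ℝ (Set.range x) ∧
    (∀ p ∈ s, isLat p → p ∈ Set.range x)

/-- A lattice triangulation of `P`: a finite face-closed family of empty lattice
simplices covering `P`, with pairwise disjoint relative interiors (every point of `P`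
lies in the relative interior of exactly one simplex), and using every lattice point
of `P` as a vertex. -/
structure IsLatticeTriangulation {m : ℕ} (P : Set (Fin m → ℝ))
    (T : Set (Set (Fin m → ℝ))) : Prop where
  finite : T.Finite
  simplex : ∀ s ∈ T, IsEmptyLatticeSimplex s
  subset : ∀ s ∈ T, s ⊆ P
  partition : ∀ p ∈ P, ∃! s, s ∈ T ∧ p ∈ intrinsicInterior ℝ s
  vertex : ∀ p ∈ P, isLat p → {p} ∈ T

/-! ### Auxiliary lemmas -/

lemma lift_lt {m : ℕ} (x : Fin m → ℝ) {k : Fin (m+1)} (h : (k:ℕ) < m) :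
    lift x k = x ⟨k, h⟩ := by
  simp [lift, Fin.snoc, h]
  rfl

lemma lift_last {m : ℕ} (x : Fin m → ℝ) : lift x (Fin.last m) = 1 := by
  rw [lift, Fin.snoc_last]

lemma sum_split {d : ℕ} (hd : 1 ≤ d) (f : Fin d → ℝ) (A C : ℝ)
    (h : ∀ j : Fin d, f j = if j = ⟨d-1, by omega⟩ then A else C) :
    ∑ j, f j = A + ((d:ℝ) - 1) * C := by
  have h1 : ∑ j, f j
      = ∑ j : Fin d, ((if j = (⟨d-1, by omega⟩ : Fin d) then A - C else 0) + C) := by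
    refine Finset.sum_congr rfl fun j _ => ?_
    rw [h j]; split <;> ring
  rw [h1, Finset.sum_add_distrib, Finset.sum_ite_eq', Finset.sum_const]
  simp [Finset.card_univ]
  ring

lemma intrinsic_sub_int {n : ℕ} {s : Set (Fin n → ℝ)} (h : affineSpan ℝ s = ⊤) :
    intrinsicInterior ℝ s ⊆ interior s := by
  intro x hx
  obtain ⟨y, hy, rfl⟩ := mem_intrinsicInterior.1 hx
  have hopen : IsOpen ((affineSpan ℝ s : AffineSubspace ℝ (Fin n → ℝ)) : Set (Fin n → ℝ)) := by
    rw [h]; simp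
  have h2 := hopen.isOpenEmbedding_subtypeVal.isOpenMap.image_interior_subset _
    (Set.mem_image_of_mem _ hy)
  exact interior_mono (Set.image_preimage_subset _ _) h2

/-- Closed bounds satisfied by every element of the cone. -/
lemma cone_bounds {d : ℕ} (hd : 2 ≤ d) {P : Set (Fin d → ℝ)}
    (hP : P = {x : Fin d → ℝ |
      (∀ i : Fin d, (i : ℕ) < d - 1 → 0 ≤ x i ∧ x i ≤ 2) ∧
      (0 ≤ x ⟨d - 1, by have := hd; omega⟩ ∧ x ⟨d - 1, by have := hd; omega⟩ ≤ (d : ℝ)) ∧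
      (∑ i, x i) ≤ (d : ℝ) + 1})
    {y : Fin (d+1) → ℝ} (hy : y ∈ coneOf P) :
    (∀ k : Fin (d+1), (k:ℕ) < d - 1 → 0 ≤ y k) ∧
    (∑ j : Fin d, y (Fin.castSucc j)) ≤ ((d:ℝ) + 1) * y (Fin.last d) := by
  obtain ⟨c, p, hc, hpP, rfl⟩ := hy
  rw [hP] at hpP
  obtain ⟨h1, h2, h3⟩ := hpP
  have hcast : ∀ j : Fin d, (c • lift p) (Fin.castSucc j) = c * p j := by
    intro j
    have hj : ((Fin.castSucc j : Fin (d+1)) : ℕ) < d := by simp [j.isLt]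
    rw [Pi.smul_apply, lift_lt p hj, smul_eq_mul]
    congr 1
  constructor
  · intro k hk
    have hkd : (k:ℕ) < d := by omega
    rw [Pi.smul_apply, lift_lt p hkd, smul_eq_mul]
    exact mul_nonneg hc (h1 ⟨k, hkd⟩ hk).1
  · have hlast : (c • lift p) (Fin.last d) = c := by
      rw [Pi.smul_apply, lift_last, smul_eq_mul, mul_one]
    rw [hlast]
    calc ∑ j : Fin d, (c • lift p) (Fin.castSucc j) = ∑ j : Fin d, c * p j :=
          Finset.sum_congr rfl fun j _ => hcast j
    _ = c * ∑ j, p j := by rw [Finset.mul_sum]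
    _ ≤ c * ((d:ℝ) + 1) := mul_le_mul_of_nonneg_left h3 hc
    _ = ((d:ℝ) + 1) * c := by ring

/-- Strict bounds satisfied by interior points of the cone. -/
lemma interior_strict {d : ℕ} (hd : 2 ≤ d) {P : Set (Fin d → ℝ)}
    (hP : P = {x : Fin d → ℝ |
      (∀ i : Fin d, (i : ℕ) < d - 1 → 0 ≤ x i ∧ x i ≤ 2) ∧
      (0 ≤ x ⟨d - 1, by have := hd; omega⟩ ∧ x ⟨d - 1, by have := hd; omega⟩ ≤ (d : ℝ)) ∧
      (∑ i, x i) ≤ (d : ℝ) + 1})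
    {z : Fin (d+1) → ℝ} (hz : z ∈ interior (coneOf P)) :
    (∀ k : Fin (d+1), (k:ℕ) < d - 1 → 0 < z k) ∧
    (∑ j : Fin d, z (Fin.castSucc j)) < ((d:ℝ) + 1) * z (Fin.last d) := by
  obtain ⟨ε, hε, hball⟩ := Metric.mem_nhds_iff.1 (mem_interior_iff_mem_nhds.1 hz)
  have hpert : ∀ k : Fin (d+1), (fun b => if b = k then z b - ε/2 else z b) ∈ coneOf P := by
    intro k
    apply hball
    rw [Metric.mem_ball]
    rw [dist_pi_lt_iff hε]
    intro b
    by_cases hb : b = k <;> simp [hb, Real.dist_eq, abs_of_nonneg, hε.le] <;> linarith [abs_of_nonneg (le_of_lt (half_pos hε))]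
  constructor
  · intro k hk
    have h := (cone_bounds hd hP (hpert k)).1 k hk
    simp only [if_pos rfl, if_true, ite_true] at h
    linarith
  · have h := (cone_bounds hd hP (hpert (Fin.last d))).2
    have hne : ∀ j : Fin d, (Fin.castSucc j) ≠ Fin.last d := fun j => (Fin.castSucc_lt_last j).ne
    have hs : ∑ j : Fin d, (fun b => if b = Fin.last d then z b - ε/2 else z b) (Fin.castSucc j)
        = ∑ j : Fin d, z (Fin.castSucc j) :=
      Finset.sum_congr rfl fun j _ => by simp [hne j]
    rw [hs] at h
    simp only [if_pos rfl, if_true, ite_true] at h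
    have hd0 : (0:ℝ) < (d:ℝ) + 1 := by positivity
    nlinarith

/-- Properties of elements of the semigroup `M(P)`. -/
lemma msemi_props {d : ℕ} (hd : 2 ≤ d) {P : Set (Fin d → ℝ)}
    (hP : P = {x : Fin d → ℝ |
      (∀ i : Fin d, (i : ℕ) < d - 1 → 0 ≤ x i ∧ x i ≤ 2) ∧
      (0 ≤ x ⟨d - 1, by have := hd; omega⟩ ∧ x ⟨d - 1, by have := hd; omega⟩ ≤ (d : ℝ)) ∧
      (∑ i, x i) ≤ (d : ℝ) + 1})
    {w : Fin (d+1) → ℝ} (hw : w ∈ Msemi P) :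
    (∀ k, 0 ≤ w k) ∧ isLat w ∧
    w ⟨d-1, by omega⟩ ≤ (d:ℝ) * w (Fin.last d) ∧
    (∃ n : ℕ, w (Fin.last d) = n) ∧
    (w (Fin.last d) = 0 → w = 0) := by
  have hw' : w ∈ AddSubmonoid.closure {y | ∃ p ∈ P, isLat p ∧ y = lift p} := hw
  clear hw
  induction hw' using AddSubmonoid.closure_induction with
  | mem x hx =>
    obtain ⟨p, hpP, hplat, rfl⟩ := hx
    rw [hP] at hpP
    obtain ⟨h1, h2, h3⟩ := hpP
    have hlast : lift p (Fin.last d) = 1 := lift_last p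
    have hnn : ∀ k : Fin (d+1), 0 ≤ lift p k := by
      intro k
      rcases lt_or_ge (k:ℕ) d with hk | hk
      · rw [lift_lt p hk]
        rcases lt_or_ge (k:ℕ) (d-1) with hk1 | hk1
        · exact (h1 ⟨k, hk⟩ hk1).1
        · have : (⟨(k:ℕ), hk⟩ : Fin d) = ⟨d-1, by omega⟩ := by
            ext; simp; omega
          rw [this]; exact h2.1
      · have hk' : k = Fin.last d := by ext; simp; omega
        rw [hk', hlast]; norm_num
    refine ⟨hnn, ?_, ?_, ⟨1, by rw [hlast]; norm_num⟩, ?_⟩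
    · intro k
      rcases lt_or_ge (k:ℕ) d with hk | hk
      · rw [lift_lt p hk]; exact hplat _
      · have hk' : k = Fin.last d := by ext; simp; omega
        rw [hk', hlast]; exact ⟨1, by norm_num⟩
    · have : lift p ⟨d-1, by omega⟩ = p ⟨d-1, by omega⟩ := by
        rw [lift_lt p (show ((⟨d-1, by omega⟩ : Fin (d+1)):ℕ) < d by simp; omega)]
      rw [this, hlast, mul_one]
      exact h2.2
    · intro h0; rw [hlast] at h0; norm_num at h0
  | zero =>
    refine ⟨fun k => le_refl 0, fun k => ⟨0, by simp⟩, ?_, ⟨0, by simp⟩, fun _ => rfl⟩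
    simp
  | add x y hx hy ihx ihy =>
    obtain ⟨ax, bx, cx, ⟨nx, hnx⟩, zx⟩ := ihx
    obtain ⟨ay, by', cy, ⟨ny, hny⟩, zy⟩ := ihy
    refine ⟨fun k => add_nonneg (ax k) (ay k), ?_, ?_, ⟨nx + ny, ?_⟩, ?_⟩
    · intro k
      obtain ⟨mx, hmx⟩ := bx k
      obtain ⟨my, hmy⟩ := by' k
      exact ⟨mx + my, by push_cast [Pi.add_apply, hmx, hmy]; ring⟩
    · simp only [Pi.add_apply]; linarith
    · push_cast [Pi.add_apply, hnx, hny]; ring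
    · intro h0
      simp only [Pi.add_apply, hnx, hny] at h0
      have hx0 : (nx:ℝ) = 0 ∧ (ny:ℝ) = 0 := by
        constructor <;> [nlinarith [Nat.cast_nonneg (α := ℝ) nx, Nat.cast_nonneg (α := ℝ) ny];
          nlinarith [Nat.cast_nonneg (α := ℝ) nx, Nat.cast_nonneg (α := ℝ) ny]]
      rw [zx (by rw [hnx, hx0.1]), zy (by rw [hny, hx0.2]), add_zero]

/-- A small ball around `yᵢ` lies in the cone. -/
lemma ball_sub_cone {d : ℕ} (hd : 2 ≤ d) {P : Set (Fin d → ℝ)}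
    (hP : P = {x : Fin d → ℝ |
      (∀ i : Fin d, (i : ℕ) < d - 1 → 0 ≤ x i ∧ x i ≤ 2) ∧
      (0 ≤ x ⟨d - 1, by have := hd; omega⟩ ∧ x ⟨d - 1, by have := hd; omega⟩ ≤ (d : ℝ)) ∧
      (∑ i, x i) ≤ (d : ℝ) + 1})
    {i : ℕ} (hi1 : 1 ≤ i) (hi2 : i ≤ d - 1) :
    Metric.ball (fun k : Fin (d + 1) => if (k : ℕ) < d - 1 then (1 : ℝ)
        else if (k : ℕ) = d - 1 then ((i : ℝ) - 1) * d + i else (i : ℝ))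
      (1/(2*(d:ℝ)+2)) ⊆ coneOf P := by
  set y : Fin (d+1) → ℝ := fun k : Fin (d + 1) => if (k : ℕ) < d - 1 then (1 : ℝ)
        else if (k : ℕ) = d - 1 then ((i : ℝ) - 1) * d + i else (i : ℝ) with hydef
  set B : ℝ := ((i : ℝ) - 1) * d + i with hB
  set ε : ℝ := 1/(2*(d:ℝ)+2) with hεdef
  have hdR : (2:ℝ) ≤ d := by exact_mod_cast hd
  have hiR : (1:ℝ) ≤ i := by exact_mod_cast hi1
  have hiR2 : (i:ℝ) ≤ (d:ℝ) - 1 := by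
    have : ((i:ℝ) + 1) ≤ d := by exact_mod_cast (show i + 1 ≤ d by omega)
    linarith
  have hε : 0 < ε := by rw [hεdef]; positivity
  have hε2 : ε * (2*(d:ℝ)+2) = 1 := by
    rw [hεdef]; field_simp
  have hεsmall : ε ≤ 1/6 := by nlinarith
  have hBge : 1 ≤ B := by rw [hB]; nlinarith
  have hBle : B ≤ (d:ℝ) * i - 1 := by rw [hB]; nlinarith
  -- values of y
  have hyval1 : ∀ k : Fin (d+1), (k:ℕ) < d - 1 → y k = 1 := by
    intro k hk; simp only [hydef]; rw [if_pos hk]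
  have hyval2 : ∀ k : Fin (d+1), (k:ℕ) = d - 1 → y k = B := by
    intro k hk; simp only [hydef]; rw [if_neg (by omega), if_pos hk, hB]
  have hyval3 : y (Fin.last d) = i := by
    simp only [hydef, Fin.val_last]; rw [if_neg (by omega), if_neg (by omega)]
  intro u hu
  rw [Metric.mem_ball] at hu
  have habs : ∀ b, |u b - y b| < ε := by
    intro b
    have := (dist_pi_lt_iff hε).1 hu b
    rwa [Real.dist_eq] at this
  have hclose : ∀ b, y b - ε < u b ∧ u b < y b + ε := by
    intro b
    have h := abs_lt.1 (habs b)
    constructor <;> linarith [h.1, h.2]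
  set c : ℝ := u (Fin.last d) with hc
  have hcb : (i:ℝ) - ε < c ∧ c < (i:ℝ) + ε := by
    have h := hclose (Fin.last d); rw [hyval3] at h; exact h
  have hc0 : 0 < c := by linarith [hcb.1]
  refine ⟨c, fun j => u (Fin.castSucc j) / c, hc0.le, ?_, ?_⟩
  · rw [hP]
    have hcoe : ∀ j : Fin d, ((Fin.castSucc j : Fin (d+1)) : ℕ) = (j:ℕ) := fun j => rfl
    refine ⟨?_, ⟨?_, ?_⟩, ?_⟩
    · intro j hj
      have h := hclose (Fin.castSucc j)
      rw [hyval1 _ (by rw [hcoe]; exact hj)] at h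
      constructor
      · exact div_nonneg (by linarith [h.1]) hc0.le
      · rw [div_le_iff₀ hc0]
        nlinarith [h.2, hcb.1]
    · have h := hclose (Fin.castSucc (⟨d-1, by omega⟩ : Fin d))
      rw [hyval2 _ (by rw [hcoe])] at h
      exact div_nonneg (by linarith [h.1]) hc0.le
    · have h := hclose (Fin.castSucc (⟨d-1, by omega⟩ : Fin d))
      rw [hyval2 _ (by rw [hcoe])] at h
      rw [div_le_iff₀ hc0]
      nlinarith [h.2, hcb.1]
    · rw [← Finset.sum_div, div_le_iff₀ hc0]
      have hysum : ∑ j : Fin d, y (Fin.castSucc j) = B + ((d:ℝ) - 1) * 1 := by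
        refine sum_split (by omega) _ B 1 ?_
        intro j
        by_cases hj : (j:ℕ) < d - 1
        · rw [hyval1 _ hj, if_neg]
          intro hje
          rw [hje] at hj
          simp at hj
        · have hje : j = (⟨d-1, by omega⟩ : Fin d) := by
            ext; simp; omega
          rw [hje, hyval2 _ rfl, if_pos rfl]
      have hle : ∑ j : Fin d, u (Fin.castSucc j) ≤ ∑ j : Fin d, (y (Fin.castSucc j) + ε) :=
        Finset.sum_le_sum fun j _ => le_of_lt (hclose _).2
      rw [Finset.sum_add_distrib, Finset.sum_const, Finset.card_univ, Fintype.card_fin,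
        nsmul_eq_mul, hysum] at hle
      nlinarith [hcb.1, hle]
  · funext k
    refine Fin.lastCases ?_ ?_ k
    · rw [Pi.smul_apply, lift_last, smul_eq_mul, mul_one]
    · intro j
      have hj : ((Fin.castSucc j : Fin (d+1)) : ℕ) < d := j.isLt
      rw [Pi.smul_apply, lift_lt _ hj, smul_eq_mul]
      have : (⟨((Fin.castSucc j : Fin (d+1)) : ℕ), hj⟩ : Fin d) = j := by ext; rfl
      rw [this, mul_comm, div_mul_cancel₀ _ hc0.ne']

/-- for the polytope `0 ≤ xᵢ ≤ 2` (`i < d`), `0 ≤ x_d ≤ d`,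
`x₁ + ⋯ + x_d ≤ d + 1`, the points `yᵢ = (1,…,1,(i−1)d+i,i)` lie in `M*(P)` and are
`M(P)`-irreducible, i.e. `rdeg yᵢ = i`, for `1 ≤ i ≤ d - 1`. -/
theorem stmt14 {d : ℕ} (hd : 2 ≤ d) (P : Set (Fin d → ℝ))
    (hP : P = {x : Fin d → ℝ |
      (∀ i : Fin d, (i : ℕ) < d - 1 → 0 ≤ x i ∧ x i ≤ 2) ∧
      (0 ≤ x ⟨d - 1, by omega⟩ ∧ x ⟨d - 1, by omega⟩ ≤ (d : ℝ)) ∧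
      (∑ i, x i) ≤ (d : ℝ) + 1}) :
    ∀ i : ℕ, 1 ≤ i → i ≤ d - 1 →
      (fun k : Fin (d + 1) => if (k : ℕ) < d - 1 then (1 : ℝ)
        else if (k : ℕ) = d - 1 then ((i : ℝ) - 1) * d + i else (i : ℝ)) ∈ Mstar P ∧
      rdeg P (fun k : Fin (d + 1) => if (k : ℕ) < d - 1 then (1 : ℝ)
        else if (k : ℕ) = d - 1 then ((i : ℝ) - 1) * d + i else (i : ℝ)) = (i : ℝ) := by
  intro i hi1 hi2
  set y : Fin (d+1) → ℝ := fun k : Fin (d + 1) => if (k : ℕ) < d - 1 then (1 : ℝ)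
        else if (k : ℕ) = d - 1 then ((i : ℝ) - 1) * d + i else (i : ℝ) with hydef
  set B : ℝ := ((i : ℝ) - 1) * d + i with hB
  have hdR : (2:ℝ) ≤ d := by exact_mod_cast hd
  have hiR : (1:ℝ) ≤ i := by exact_mod_cast hi1
  have hiR2 : (i:ℝ) ≤ (d:ℝ) - 1 := by
    have : ((i:ℝ) + 1) ≤ d := by exact_mod_cast (show i + 1 ≤ d by omega)
    linarith
  have hyval1 : ∀ k : Fin (d+1), (k:ℕ) < d - 1 → y k = 1 := by
    intro k hk; simp only [hydef]; rw [if_pos hk]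
  have hyval2 : ∀ k : Fin (d+1), (k:ℕ) = d - 1 → y k = B := by
    intro k hk; simp only [hydef]; rw [if_neg (by omega), if_pos hk, hB]
  have hyval3 : y (Fin.last d) = i := by
    simp only [hydef, Fin.val_last]; rw [if_neg (by omega), if_neg (by omega)]
  have hε : (0:ℝ) < 1/(2*(d:ℝ)+2) := by positivity
  have hint : y ∈ interior (coneOf P) :=
    mem_interior.2 ⟨_, ball_sub_cone hd hP hi1 hi2, Metric.isOpen_ball, Metric.mem_ball_self hε⟩
  have hylat : isLat y := by
    intro k
    by_cases h1 : (k:ℕ) < d - 1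
    · exact ⟨1, by rw [hyval1 k h1]; norm_num⟩
    · by_cases h2 : (k:ℕ) = d - 1
      · refine ⟨((i:ℤ) - 1) * d + i, ?_⟩
        rw [hyval2 k h2, hB]; push_cast; ring
      · refine ⟨(i:ℤ), ?_⟩
        have hk : k = Fin.last d := by ext; simp; omega
        rw [hk, hyval3]; norm_num
  have hyM : y ∈ Mstar P := ⟨interior_subset_intrinsicInterior hint, hylat⟩
  refine ⟨hyM, ?_⟩
  have htop : affineSpan ℝ (coneOf P) = ⊤ :=
    affineSpan_eq_top_of_nonempty_interior ⟨y, interior_mono (subset_convexHull ℝ _) hint⟩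
  have hset : {r | ∃ z w, z ∈ Mstar P ∧ w ∈ Msemi P ∧ y = z + w ∧ r = deg z} = {(i:ℝ)} := by
    ext r
    simp only [Set.mem_setOf_eq, Set.mem_singleton_iff]
    constructor
    · rintro ⟨z, w, hz, hw, hsum, rfl⟩
      have hzint := intrinsic_sub_int htop hz.1
      obtain ⟨hzpos, hzsum⟩ := interior_strict hd hP hzint
      obtain ⟨hwnn, hwlat, hwfs, ⟨n, hn⟩, -⟩ := msemi_props hd hP hw
      have hzk : ∀ k : Fin (d+1), z k = y k - w k := by
        intro k
        have := congrFun hsum k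
        simp only [Pi.add_apply] at this
        linarith
      have hwk0 : ∀ k : Fin (d+1), (k:ℕ) < d - 1 → w k = 0 := by
        intro k hk
        obtain ⟨m, hm⟩ := hwlat k
        have h1 : 0 < z k := hzpos k hk
        have h2 : z k = 1 - w k := by rw [hzk k, hyval1 k hk]
        have h3 : 0 ≤ w k := hwnn k
        have hm1 : (0:ℝ) ≤ (m:ℝ) := by rw [← hm]; exact h3
        have hm2 : (m:ℝ) < 1 := by rw [← hm]; linarith
        have : m = 0 := by exact_mod_cast (by
          have : (0:ℤ) ≤ m := by exact_mod_cast hm1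
          have : (m:ℤ) < 1 := by exact_mod_cast hm2
          omega : m = (0:ℤ))
        rw [hm, this]; norm_num
      -- the special index
      set fs : Fin (d+1) := ⟨d-1, by omega⟩ with hfs
      have hfscoe : (fs : ℕ) = d - 1 := rfl
      have hzsum2 : ∑ j : Fin d, z (Fin.castSucc j) = (B - w fs) + ((d:ℝ) - 1) * 1 := by
        refine sum_split (by omega) _ (B - w fs) 1 ?_
        intro j
        by_cases hj : (j:ℕ) < d - 1
        · rw [hzk, hyval1 _ hj, hwk0 _ hj, if_neg]
          · norm_num
          · intro hje
            rw [hje] at hj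
            simp at hj
        · have hje : j = (⟨d-1, by omega⟩ : Fin d) := by ext; simp; omega
          have hcast : (Fin.castSucc (⟨d-1, by omega⟩ : Fin d)) = fs := by ext; rfl
          rw [hje, if_pos rfl, hcast, hzk, hyval2 fs hfscoe]
      have hzlast : z (Fin.last d) = (i:ℝ) - n := by
        rw [hzk, hyval3, hn]
      rw [hzsum2, hzlast] at hzsum
      have hwfs' : w fs ≤ (d:ℝ) * n := by rw [← hn]; exact hwfs
      have hn1 : (n:ℝ) < 1 := by nlinarith
      have hn0 : n = 0 := by exact_mod_cast (by
        have h0 : (0:ℤ) ≤ (n:ℤ) := Int.ofNat_nonneg n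
        have h1' : ((n:ℤ):ℝ) < 1 := by push_cast; exact hn1
        have : (n:ℤ) < 1 := by exact_mod_cast h1'
        omega : (n:ℤ) = 0)
      rw [deg, hzlast, hn0]
      norm_num
    · rintro rfl
      exact ⟨y, 0, hyM, (Msemi P).zero_mem, (add_zero y).symm, by rw [deg, hyval3]⟩
  rw [rdeg, hset, csInf_singleton]
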